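/- Let r > 2 and let (X_n)_{n≥0} be an ℝ^d-valued Markov chain with transition kernel P, initial distribution ν and invariant probability measure π, satisfying ‖P^n f − π(f)‖_{L²(π)} ≤ C₀ ρ_n ‖f − π(f)‖_{L²(π)} for all n ≥ 1 and f ∈ L²(π), with Σ_{n≥1} ρ_n < ∞, and with ν absolutely continuous with respect to π and ‖dν/dπ‖_{L^r(π)} < ∞. Set μ_N := N^{−1} Σ_{n=1}^N δ_{X_n}. Then there is a constant C (depending on C₀, Σρ_n, r, ‖dν/dπ‖_{L^r(π)}) such that for every Borel set A ⊂ ℝ^d and every N ≥ 1, E_ν[|μ_N(A) − π(A)|] ≤ C (π(A))^{(r−1)/(2r)} N^{−1/2}. -/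

import Mathlib

open MeasureTheory ProbabilityTheory Real Set ENNReal NNReal

noncomputable section

/-- `T_p(μ,ν)`: infimum over couplings of `∫ |x-y|^p`. -/
def Tcost (d : ℕ) (p : ℝ) (μ ν : Measure (EuclideanSpace ℝ (Fin d))) : ℝ :=
  sInf { r : ℝ | ∃ ξ : Measure (EuclideanSpace ℝ (Fin d) × EuclideanSpace ℝ (Fin d)),
    ξ.fst = μ ∧ ξ.snd = ν ∧ r = ∫ z, ‖z.1 - z.2‖ ^ p ∂ξ }

/-- empirical measure of the points `X 0, ..., X (N-1)`. -/
def empMeas (d N : ℕ) (X : ℕ → EuclideanSpace ℝ (Fin d)) : Measure (EuclideanSpace ℝ (Fin d)) :=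
  ((N : ℝ≥0∞))⁻¹ • ∑ k ∈ Finset.range N, Measure.dirac (X k)

/-- the cube of the partition `P_ℓ` of `(-1,1]^d` indexed by `k`. -/
def cube (d ℓ : ℕ) (k : Fin d → Fin (2 ^ ℓ)) : Set (EuclideanSpace ℝ (Fin d)) :=
  {x | ∀ i, x i ∈ Set.Ioc (-1 + (k i : ℝ) * 2 ^ (1 - (ℓ : ℤ)))
    (-1 + ((k i : ℝ) + 1) * 2 ^ (1 - (ℓ : ℤ)))}

/-- `D_p` for measures on `(-1,1]^d`. -/
def DpCpt (d : ℕ) (p : ℝ) (μ ν : Measure (EuclideanSpace ℝ (Fin d))) : ℝ :=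
  (2 ^ p - 1) / 2 * ∑' ℓ : ℕ, 2 ^ (-(p * ((ℓ : ℝ) + 1))) *
    ∑ k : Fin d → Fin (2 ^ (ℓ + 1)),
      |(μ (cube d (ℓ + 1) k)).toReal - (ν (cube d (ℓ + 1) k)).toReal|

/-- the annuli `B_n`. -/
def Bset (d n : ℕ) : Set (EuclideanSpace ℝ (Fin d)) :=
  if n = 0 then {x | ∀ i, x i ∈ Set.Ioc (-1 : ℝ) 1}
  else {x | ∀ i, x i ∈ Set.Ioc (-(2 : ℝ) ^ n) ((2 : ℝ) ^ n)} \
    {x | ∀ i, x i ∈ Set.Ioc (-(2 : ℝ) ^ (n - 1)) ((2 : ℝ) ^ (n - 1))}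

/-- `R_{B_n} μ`: image of `μ|_{B_n}/μ(B_n)` by `x ↦ x/2^n`. -/
def Rres (d n : ℕ) (μ : Measure (EuclideanSpace ℝ (Fin d))) :
    Measure (EuclideanSpace ℝ (Fin d)) :=
  Measure.map (fun x => ((2 : ℝ) ^ n)⁻¹ • x) ((μ (Bset d n))⁻¹ • μ.restrict (Bset d n))

/-- `D_p` for measures on `ℝ^d`. -/
def Dp (d : ℕ) (p : ℝ) (μ ν : Measure (EuclideanSpace ℝ (Fin d))) : ℝ :=
  ∑' n : ℕ, 2 ^ (p * n) *
    (|(μ (Bset d n)).toReal - (ν (Bset d n)).toReal| +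
      min (μ (Bset d n)).toReal (ν (Bset d n)).toReal *
        DpCpt d p (Rres d n μ) (Rres d n ν))

/-- `f(x) = (1+x)log(1+x) - x`. -/
def fBen (x : ℝ) : ℝ := (1 + x) * Real.log (1 + x) - x

/-- `g(x) = (x log x - x + 1) 1_{x ≥ 1}`. -/
def gBen (x : ℝ) : ℝ := if 1 ≤ x then x * Real.log x - x + 1 else 0


/-- `n`-step transition kernel. -/
def kiter (d : ℕ)
    (K : ProbabilityTheory.Kernel (EuclideanSpace ℝ (Fin d)) (EuclideanSpace ℝ (Fin d))) :
    ℕ → ProbabilityTheory.Kernel (EuclideanSpace ℝ (Fin d)) (EuclideanSpace ℝ (Fin d))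
  | 0 => ProbabilityTheory.Kernel.id
  | n + 1 => K ∘ₖ kiter d K n

namespace FGaux

variable {α β : Type*} [MeasurableSpace α] [MeasurableSpace β]

lemma integrable_of_abs_le {μ : Measure α} [IsFiniteMeasure μ] {g : α → ℝ}
    (hg : AEStronglyMeasurable g μ) {M : ℝ} (hb : ∀ x, |g x| ≤ M) : Integrable g μ :=
  ⟨hg, HasFiniteIntegral.of_bounded (C := M) (Filter.Eventually.of_forall fun x => by
    simpa [Real.norm_eq_abs] using hb x)⟩

lemma abs_integral_le {μ : Measure α} [IsProbabilityMeasure μ] {g : α → ℝ}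
    (hg : AEStronglyMeasurable g μ) {M : ℝ} (hb : ∀ x, |g x| ≤ M) : |∫ x, g x ∂μ| ≤ M := by
  have hint : Integrable g μ := integrable_of_abs_le hg hb
  calc |∫ x, g x ∂μ| ≤ ∫ x, |g x| ∂μ := by
        simpa [Real.norm_eq_abs] using norm_integral_le_integral_norm (μ := μ) g
    _ ≤ ∫ _x, M ∂μ := integral_mono hint.abs (integrable_const M) (fun x => hb x)
    _ = M := by simp

lemma measurable_kernel_integral (κ : ProbabilityTheory.Kernel α β) [IsSFiniteKernel κ]
    {g : β → ℝ} (hg : Measurable g) :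
    Measurable (fun x => ∫ y, g y ∂κ x) := by
  have h : StronglyMeasurable (Function.uncurry fun (_ : α) (y : β) => g y) :=
    hg.stronglyMeasurable.comp_measurable measurable_snd
  exact (h.integral_kernel_prod_right (κ := κ)).measurable

lemma integral_bind_kernel (μ : Measure α) [IsProbabilityMeasure μ]
    (κ : ProbabilityTheory.Kernel α β) [IsMarkovKernel κ]
    {g : β → ℝ} (hg : Measurable g) {M : ℝ} (hb : ∀ x, |g x| ≤ M) :
    ∫ y, g y ∂(μ.bind (fun x => κ x)) = ∫ x, ∫ y, g y ∂κ x ∂μ := by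
  have hsnd : Measure.map Prod.snd (μ ⊗ₘ κ) = μ.bind (fun x => κ x) := by
    ext s hs
    rw [Measure.map_apply measurable_snd hs, Measure.compProd_apply (measurable_snd hs),
      Measure.bind_apply hs (Kernel.measurable κ).aemeasurable]
    rfl
  have hint : Integrable (fun p : α × β => g p.2) (μ ⊗ₘ κ) :=
    integrable_of_abs_le ((hg.comp measurable_snd).aestronglyMeasurable) (fun p => hb p.2)
  rw [← hsnd, integral_map measurable_snd.aemeasurable hg.aestronglyMeasurable,
    Measure.integral_compProd hint]

lemma jensen_rpow {μ : Measure α} [IsProbabilityMeasure μ] {f : α → ℝ} (hf : Measurable f)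
    (h0 : ∀ x, 0 ≤ f x) {M : ℝ} (hb : ∀ x, f x ≤ M) {q : ℝ} (hq : 1 ≤ q) :
    (∫ x, f x ∂μ) ^ q ≤ ∫ x, f x ^ q ∂μ := by
  have hq0 : (0:ℝ) ≤ q := by linarith
  have hint : Integrable f μ :=
    integrable_of_abs_le hf.aestronglyMeasurable (M := M) (fun x => by
      rw [abs_of_nonneg (h0 x)]; exact hb x)
  have hint2 : Integrable (fun x => f x ^ q) μ :=
    integrable_of_abs_le ((Real.continuous_rpow_const hq0).measurable.comp hf).aestronglyMeasurable
      (M := M ^ q) (fun x => by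
        rw [abs_of_nonneg (Real.rpow_nonneg (h0 x) q)]
        exact Real.rpow_le_rpow (h0 x) (hb x) hq0)
  exact (convexOn_rpow hq).map_integral_le
    ((Real.continuous_rpow_const hq0).continuousOn) isClosed_Ici
    (Filter.Eventually.of_forall h0) hint hint2

end FGaux

namespace FGaux

variable {α β : Type*} [MeasurableSpace α] [MeasurableSpace β]

variable {d : ℕ} {K : ProbabilityTheory.Kernel (EuclideanSpace ℝ (Fin d)) (EuclideanSpace ℝ (Fin d))}

lemma kiter_markov [IsMarkovKernel K] (n : ℕ) : IsMarkovKernel (kiter d K n) := by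
  induction n with
  | zero => simp only [kiter]; infer_instance
  | succ n ih => simp only [kiter]; haveI := ih; infer_instance

lemma kiter_zero_apply (x : EuclideanSpace ℝ (Fin d)) :
    kiter d K 0 x = Measure.dirac x := by
  simp only [kiter]; exact Kernel.id_apply x

lemma kiter_succ_apply (k : ℕ) (x : EuclideanSpace ℝ (Fin d)) :
    kiter d K (k + 1) x = (kiter d K k x).bind (fun y => K y) := by
  simp only [kiter]; rw [Kernel.comp_apply]

lemma kiter_integral_zero {g : EuclideanSpace ℝ (Fin d) → ℝ} (hg : Measurable g)
    (x : EuclideanSpace ℝ (Fin d)) :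
    ∫ y, g y ∂(kiter d K 0 x) = g x := by
  rw [kiter_zero_apply, integral_dirac' _ _ hg.stronglyMeasurable]

lemma kiter_integral_succ [IsMarkovKernel K] {g : EuclideanSpace ℝ (Fin d) → ℝ}
    (hg : Measurable g) {M : ℝ} (hb : ∀ x, |g x| ≤ M) (k : ℕ) (x : EuclideanSpace ℝ (Fin d)) :
    ∫ y, g y ∂(kiter d K (k + 1) x) = ∫ z, (∫ y, g y ∂K z) ∂(kiter d K k x) := by
  haveI := kiter_markov (K := K) k
  rw [kiter_succ_apply]
  exact integral_bind_kernel (kiter d K k x) K hg hb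

lemma kiter_invariant [IsMarkovKernel K] {pim : Measure (EuclideanSpace ℝ (Fin d))}
    (hinv : pim.bind (fun x => K x) = pim) (n : ℕ) :
    pim.bind (fun x => kiter d K n x) = pim := by
  induction n with
  | zero =>
    have h : (fun x => kiter d K 0 x) = Measure.dirac := funext fun x => kiter_zero_apply x
    rw [h, Measure.bind_dirac]
  | succ n ih =>
    have h : (fun x => kiter d K (n + 1) x) = fun x => (kiter d K n x).bind (fun y => K y) :=
      funext fun x => kiter_succ_apply n x
    rw [h, ← Measure.bind_bind (Kernel.measurable _).aemeasurable (Kernel.measurable K).aemeasurable, ih, hinv]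

lemma contraction_rpow {pim : Measure α} [IsProbabilityMeasure pim]
    (κ : ProbabilityTheory.Kernel α α) [IsMarkovKernel κ] (hκ : pim.bind (fun x => κ x) = pim)
    {φ : α → ℝ} (hφ : Measurable φ) (hb : ∀ x, |φ x| ≤ 1) {q : ℝ} (hq : 1 ≤ q) :
    ∫ x, |∫ y, φ y ∂κ x| ^ q ∂pim ≤ ∫ x, |φ x| ^ q ∂pim := by
  have hq0 : (0:ℝ) ≤ q := by linarith
  have habs : Measurable fun y => |φ y| := hφ.abs
  have hmq : Measurable fun y => |φ y| ^ q := (Real.continuous_rpow_const hq0).measurable.comp habs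
  have hbq : ∀ y, |(|φ y| ^ q)| ≤ 1 := fun y => by
    rw [abs_of_nonneg (Real.rpow_nonneg (abs_nonneg _) q)]
    exact Real.rpow_le_one (abs_nonneg _) (hb y) hq0
  have hKint2 : Measurable fun x => ∫ y, |φ y| ^ q ∂κ x := measurable_kernel_integral κ hmq
  have hKφ : Measurable fun x => ∫ y, φ y ∂κ x := measurable_kernel_integral κ hφ
  have step1 : ∀ x, |∫ y, φ y ∂κ x| ^ q ≤ ∫ y, |φ y| ^ q ∂κ x := by
    intro x
    have h1 : |∫ y, φ y ∂κ x| ≤ ∫ y, |φ y| ∂κ x := by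
      simpa [Real.norm_eq_abs] using norm_integral_le_integral_norm (μ := κ x) φ
    calc |∫ y, φ y ∂κ x| ^ q ≤ (∫ y, |φ y| ∂κ x) ^ q :=
          Real.rpow_le_rpow (abs_nonneg _) h1 hq0
      _ ≤ ∫ y, |φ y| ^ q ∂κ x :=
          jensen_rpow habs (fun y => abs_nonneg _) (M := 1) (fun y => hb y) hq
  calc ∫ x, |∫ y, φ y ∂κ x| ^ q ∂pim ≤ ∫ x, (∫ y, |φ y| ^ q ∂κ x) ∂pim := by
        refine integral_mono ?_ ?_ step1
        · refine integrable_of_abs_le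
            ((Real.continuous_rpow_const hq0).measurable.comp hKφ.abs).aestronglyMeasurable
            (M := 1) (fun x => by
              rw [abs_of_nonneg (Real.rpow_nonneg (abs_nonneg _) q)]
              exact Real.rpow_le_one (abs_nonneg _)
                (abs_integral_le hφ.aestronglyMeasurable hb) hq0)
        · exact integrable_of_abs_le hKint2.aestronglyMeasurable (M := 1)
            (fun x => by
              rw [abs_of_nonneg (integral_nonneg (fun y => Real.rpow_nonneg (abs_nonneg _) q))]
              have := abs_integral_le (μ := κ x) hmq.aestronglyMeasurable (M := 1) hbq
              exact (le_abs_self _).trans this)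
    _ = ∫ y, |φ y| ^ q ∂(pim.bind (fun x => κ x)) :=
        (integral_bind_kernel pim κ hmq (M := 1) hbq).symm
    _ = ∫ y, |φ y| ^ q ∂pim := by rw [hκ]


lemma key_markov [IsMarkovKernel K] {Ω : Type} [MeasurableSpace Ω] (P : Measure Ω)
    [IsProbabilityMeasure P] (X : ℕ → Ω → EuclideanSpace ℝ (Fin d))
    (hX : ∀ n, Measurable (X n))
    (hM : ∀ n : ℕ, Measure.map (fun ω => ((fun i : Fin (n + 1) => X i ω), X (n + 1) ω)) P =
      (Measure.map (fun ω (i : Fin (n + 1)) => X i ω) P) ⊗ₘ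
        (K.comap (fun v : Fin (n + 1) → EuclideanSpace ℝ (Fin d) => v (Fin.last n))
          (measurable_pi_apply _))) :
    ∀ (k m : ℕ) (f g : EuclideanSpace ℝ (Fin d) → ℝ), Measurable f → Measurable g →
      (∀ x, |f x| ≤ 1) → (∀ x, |g x| ≤ 1) →
      ∫ ω, f (X m ω) * g (X (m + k) ω) ∂P =
        ∫ ω, f (X m ω) * (∫ y, g y ∂kiter d K k (X m ω)) ∂P := by
  intro k
  induction k with
  | zero =>
    intro m f g hf hg hbf hbg
    refine integral_congr_ae (Filter.Eventually.of_forall fun ω => ?_)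
    show f (X m ω) * g (X (m + 0) ω) = f (X m ω) * ∫ y, g y ∂kiter d K 0 (X m ω)
    rw [kiter_integral_zero hg]
    rfl
  | succ k ih =>
    intro m f g hf hg hbf hbg
    have hmlt : m < m + k + 1 := by omega
    have hpi : Measurable (fun ω (i : Fin (m + k + 1)) => X i ω) :=
      measurable_pi_lambda _ (fun i => hX i)
    have hpair : Measurable (fun ω => ((fun i : Fin (m + k + 1) => X i ω), X (m + k + 1) ω)) :=
      hpi.prodMk (hX (m + k + 1))
    haveI : IsProbabilityMeasure (Measure.map (fun ω (i : Fin (m + k + 1)) => X i ω) P) :=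
      Measure.isProbabilityMeasure_map hpi.aemeasurable
    have hFmeas : Measurable
        (fun p : ((Fin (m + k + 1) → EuclideanSpace ℝ (Fin d)) × EuclideanSpace ℝ (Fin d)) =>
          f (p.1 ⟨m, hmlt⟩) * g p.2) := by
      fun_prop
    have hFb : ∀ p : ((Fin (m + k + 1) → EuclideanSpace ℝ (Fin d)) × EuclideanSpace ℝ (Fin d)),
        |f (p.1 ⟨m, hmlt⟩) * g p.2| ≤ 1 := fun p => by
      rw [abs_mul]
      exact mul_le_one₀ (hbf _) (abs_nonneg _) (hbg _)
    have hKgmeas : Measurable (fun y => ∫ z, g z ∂K y) := measurable_kernel_integral K hg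
    have hKgb : ∀ y, |∫ z, g z ∂K y| ≤ 1 :=
      fun y => abs_integral_le hg.aestronglyMeasurable hbg
    have hint : Integrable
        (fun p : ((Fin (m + k + 1) → EuclideanSpace ℝ (Fin d)) × EuclideanSpace ℝ (Fin d)) =>
          f (p.1 ⟨m, hmlt⟩) * g p.2)
        ((Measure.map (fun ω (i : Fin (m + k + 1)) => X i ω) P) ⊗ₘ
          (K.comap (fun v : Fin (m + k + 1) → EuclideanSpace ℝ (Fin d) => v (Fin.last (m + k)))
            (measurable_pi_apply _))) :=
      integrable_of_abs_le hFmeas.aestronglyMeasurable hFb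
    have step1 : ∫ ω, f (X m ω) * g (X (m + (k + 1)) ω) ∂P =
        ∫ p, f (p.1 ⟨m, hmlt⟩) * g p.2
          ∂((Measure.map (fun ω (i : Fin (m + k + 1)) => X i ω) P) ⊗ₘ
            (K.comap (fun v : Fin (m + k + 1) → EuclideanSpace ℝ (Fin d) => v (Fin.last (m + k)))
              (measurable_pi_apply _))) := by
      rw [← hM (m + k), integral_map hpair.aemeasurable hFmeas.aestronglyMeasurable]
      rfl
    have step2 : ∫ p, f (p.1 ⟨m, hmlt⟩) * g p.2
          ∂((Measure.map (fun ω (i : Fin (m + k + 1)) => X i ω) P) ⊗ₘ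
            (K.comap (fun v : Fin (m + k + 1) → EuclideanSpace ℝ (Fin d) => v (Fin.last (m + k)))
              (measurable_pi_apply _))) =
        ∫ v : Fin (m + k + 1) → EuclideanSpace ℝ (Fin d),
          f (v ⟨m, hmlt⟩) * (∫ z, g z ∂K (v (Fin.last (m + k))))
          ∂(Measure.map (fun ω (i : Fin (m + k + 1)) => X i ω) P) := by
      rw [Measure.integral_compProd hint]
      refine integral_congr_ae (Filter.Eventually.of_forall fun v => ?_)
      show ∫ b, f (v ⟨m, hmlt⟩) * g b
          ∂(K.comap (fun v : Fin (m + k + 1) → EuclideanSpace ℝ (Fin d) => v (Fin.last (m + k)))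
            (measurable_pi_apply _)) v = _
      rw [Kernel.comap_apply]
      exact integral_const_mul _ _
    have h3m : Measurable (fun v : Fin (m + k + 1) → EuclideanSpace ℝ (Fin d) =>
        f (v ⟨m, hmlt⟩) * (∫ z, g z ∂K (v (Fin.last (m + k))))) := by
      have h3a : Measurable (fun v : Fin (m + k + 1) → EuclideanSpace ℝ (Fin d) =>
          v (Fin.last (m + k))) := measurable_pi_apply _
      have h3b : Measurable (fun v : Fin (m + k + 1) → EuclideanSpace ℝ (Fin d) =>
          v (⟨m, hmlt⟩ : Fin (m + k + 1))) := measurable_pi_apply _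
      exact (hf.comp h3b).mul (hKgmeas.comp h3a)
    have step3 : ∫ v : Fin (m + k + 1) → EuclideanSpace ℝ (Fin d),
          f (v ⟨m, hmlt⟩) * (∫ z, g z ∂K (v (Fin.last (m + k))))
          ∂(Measure.map (fun ω (i : Fin (m + k + 1)) => X i ω) P) =
        ∫ ω, f (X m ω) * (∫ z, g z ∂K (X (m + k) ω)) ∂P := by
      rw [integral_map hpi.aemeasurable h3m.aestronglyMeasurable]
      rfl
    have step4 : ∫ ω, f (X m ω) * (∫ z, g z ∂K (X (m + k) ω)) ∂P =
        ∫ ω, f (X m ω) * (∫ y, ∫ z, g z ∂K y ∂kiter d K k (X m ω)) ∂P :=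
      ih m f (fun y => ∫ z, g z ∂K y) hf hKgmeas hbf hKgb
    rw [step1, step2, step3, step4]
    refine integral_congr_ae (Filter.Eventually.of_forall fun ω => ?_)
    show f (X m ω) * (∫ y, ∫ z, g z ∂K y ∂kiter d K k (X m ω)) =
      f (X m ω) * ∫ y, g y ∂kiter d K (k + 1) (X m ω)
    rw [← kiter_integral_succ hg hbg k (X m ω)]

lemma eLpNorm_two_eq {μ : Measure α} [IsFiniteMeasure μ] {G : α → ℝ} (hG : Measurable G)
    {M : ℝ} (hb : ∀ x, |G x| ≤ M) :
    eLpNorm G 2 μ = ENNReal.ofReal ((∫ x, |G x| ^ (2:ℝ) ∂μ) ^ (1/2 : ℝ)) := by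
  have hint : Integrable (fun x => |G x| ^ (2:ℝ)) μ := integrable_of_abs_le
      (((Real.continuous_rpow_const (by norm_num)).measurable.comp hG.abs).aestronglyMeasurable)
      (M := |M| ^ (2:ℝ)) (fun x => by
        rw [abs_of_nonneg (Real.rpow_nonneg (abs_nonneg _) _)]
        exact Real.rpow_le_rpow (abs_nonneg _) ((hb x).trans (le_abs_self M)) (by norm_num))
  rw [eLpNorm_eq_lintegral_rpow_enorm_toReal (by norm_num) (by norm_num)]
  have e1 : ∀ x : α, ‖G x‖ₑ ^ ((2:ℝ≥0∞)).toReal = ENNReal.ofReal (|G x| ^ (2:ℝ)) :=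
    fun x => by
      rw [ENNReal.toReal_ofNat, Real.enorm_eq_ofReal_abs,
        ENNReal.ofReal_rpow_of_nonneg (abs_nonneg _) (by norm_num)]
  rw [lintegral_congr e1, ← ofReal_integral_eq_lintegral_ofReal hint
    (Filter.Eventually.of_forall fun x => Real.rpow_nonneg (abs_nonneg _) _),
    ENNReal.toReal_ofNat, ENNReal.ofReal_rpow_of_nonneg
      (integral_nonneg fun x => Real.rpow_nonneg (abs_nonneg _) _) (by norm_num)]

lemma core_bound {ν invμ : Measure (EuclideanSpace ℝ (Fin d))} [IsMarkovKernel K]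
    [IsProbabilityMeasure ν] [IsProbabilityMeasure invμ]
    (hinv : invμ.bind (fun x => K x) = invμ) (habs : ν ≪ invμ)
    {r rc : ℝ} (hconj : r.HolderConjugate rc)
    (hrn : MemLp (fun x => (ν.rnDeriv invμ x).toReal) (ENNReal.ofReal r) invμ)
    {φ : EuclideanSpace ℝ (Fin d) → ℝ} (hφ : Measurable φ) (hφb : ∀ x, |φ x| ≤ 1) (m : ℕ) :
    |∫ x, (∫ y, φ y ∂kiter d K m x) ∂ν| ≤
      ((∫ x, (ν.rnDeriv invμ x).toReal ^ r ∂invμ) ^ (1/r)) *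
        (∫ x, |φ x| ^ rc ∂invμ) ^ (1/rc) := by
  haveI := kiter_markov (K := K) m
  have hhmeas : Measurable (fun x => (ν.rnDeriv invμ x).toReal) :=
    (Measure.measurable_rnDeriv ν invμ).ennreal_toReal
  have hh0 : ∀ x, 0 ≤ (ν.rnDeriv invμ x).toReal := fun x => ENNReal.toReal_nonneg
  have hFm : Measurable (fun x => ∫ y, φ y ∂kiter d K m x) :=
    measurable_kernel_integral _ hφ
  have hFb : ∀ x, |∫ y, φ y ∂kiter d K m x| ≤ 1 :=
    fun x => abs_integral_le hφ.aestronglyMeasurable hφb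
  have h1 : ∫ x, (∫ y, φ y ∂kiter d K m x) ∂ν =
      ∫ x, (ν.rnDeriv invμ x).toReal * (∫ y, φ y ∂kiter d K m x) ∂invμ := by
    haveI := Measure.haveLebesgueDecomposition_of_finiteMeasure (μ := ν) (ν := invμ)
    rw [← integral_rnDeriv_smul habs]
    simp only [smul_eq_mul]
  have hFrc : MemLp (fun x => |∫ y, φ y ∂kiter d K m x|) (ENNReal.ofReal rc) invμ :=
    MemLp.of_bound hFm.abs.aestronglyMeasurable 1
      (Filter.Eventually.of_forall fun x => by
        rw [Real.norm_eq_abs, abs_abs]; exact hFb x)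
  have h2 : |∫ x, (ν.rnDeriv invμ x).toReal * (∫ y, φ y ∂kiter d K m x) ∂invμ| ≤
      ∫ x, (ν.rnDeriv invμ x).toReal * |∫ y, φ y ∂kiter d K m x| ∂invμ := by
    simpa [Real.norm_eq_abs] using
      norm_integral_le_integral_norm (μ := invμ)
        (fun x => (ν.rnDeriv invμ x).toReal * (∫ y, φ y ∂kiter d K m x))
  have h3 : ∫ x, (ν.rnDeriv invμ x).toReal * |∫ y, φ y ∂kiter d K m x| ∂invμ ≤
      ((∫ x, (ν.rnDeriv invμ x).toReal ^ r ∂invμ) ^ (1/r)) *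
        (∫ x, |∫ y, φ y ∂kiter d K m x| ^ rc ∂invμ) ^ (1/rc) :=
    integral_mul_le_Lp_mul_Lq_of_nonneg hconj (Filter.Eventually.of_forall hh0)
      (Filter.Eventually.of_forall fun x => abs_nonneg _) hrn hFrc
  have h4 : ∫ x, |∫ y, φ y ∂kiter d K m x| ^ rc ∂invμ ≤ ∫ x, |φ x| ^ rc ∂invμ :=
    contraction_rpow (kiter d K m) (kiter_invariant hinv m) hφ hφb hconj.symm.lt.le
  have h5 : (∫ x, |∫ y, φ y ∂kiter d K m x| ^ rc ∂invμ) ^ (1/rc) ≤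
      (∫ x, |φ x| ^ rc ∂invμ) ^ (1/rc) :=
    Real.rpow_le_rpow (integral_nonneg fun x => Real.rpow_nonneg (abs_nonneg _) _) h4
      (one_div_nonneg.mpr hconj.symm.nonneg)
  have hHr0 : 0 ≤ (∫ x, (ν.rnDeriv invμ x).toReal ^ r ∂invμ) ^ (1/r) :=
    Real.rpow_nonneg (integral_nonneg fun x => Real.rpow_nonneg (hh0 x) _) _
  calc |∫ x, (∫ y, φ y ∂kiter d K m x) ∂ν|
      = |∫ x, (ν.rnDeriv invμ x).toReal * (∫ y, φ y ∂kiter d K m x) ∂invμ| := by rw [h1]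
    _ ≤ ∫ x, (ν.rnDeriv invμ x).toReal * |∫ y, φ y ∂kiter d K m x| ∂invμ := h2
    _ ≤ ((∫ x, (ν.rnDeriv invμ x).toReal ^ r ∂invμ) ^ (1/r)) *
        (∫ x, |∫ y, φ y ∂kiter d K m x| ^ rc ∂invμ) ^ (1/rc) := h3
    _ ≤ _ := mul_le_mul_of_nonneg_left h5 hHr0

lemma indicator_rpow_bound {μ : Measure α} [IsProbabilityMeasure μ] {A : Set α}
    (hA : MeasurableSet A) {q : ℝ} (hq : 1 ≤ q) :
    (∫ x, |A.indicator (fun _ => (1:ℝ)) x - (μ A).toReal| ^ q ∂μ) ^ (1/q) ≤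
      2 * (μ A).toReal ^ (1/q) := by
  have hq0 : (0:ℝ) < q := by linarith
  have ha0 : 0 ≤ (μ A).toReal := ENNReal.toReal_nonneg
  have ha1 : (μ A).toReal ≤ 1 := by
    have := prob_le_one (μ := μ) (s := A)
    simpa using ENNReal.toReal_mono ENNReal.one_ne_top this
  have hptw : ∀ x, |A.indicator (fun _ => (1:ℝ)) x - (μ A).toReal| ^ q ≤
      A.indicator (fun _ => (1:ℝ)) x + (μ A).toReal ^ q := by
    intro x
    by_cases hx : x ∈ A
    · rw [Set.indicator_of_mem hx]
      have h1 : |1 - (μ A).toReal| ^ q ≤ 1 :=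
        Real.rpow_le_one (abs_nonneg _)
          (by rw [abs_of_nonneg (by linarith)]; linarith) (by linarith)
      have h2 : 0 ≤ (μ A).toReal ^ q := Real.rpow_nonneg ha0 _
      linarith
    · rw [Set.indicator_of_notMem hx]
      rw [zero_sub, abs_neg, abs_of_nonneg ha0, zero_add]
  have hmeas : Measurable (A.indicator (fun _ => (1:ℝ))) := measurable_const.indicator hA
  have hint1 : Integrable (fun x => |A.indicator (fun _ => (1:ℝ)) x - (μ A).toReal| ^ q) μ :=
    integrable_of_abs_le
      (((Real.continuous_rpow_const hq0.le).measurable.comp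
        (hmeas.sub measurable_const).abs).aestronglyMeasurable)
      (M := 2 ^ q) (fun x => by
        rw [abs_of_nonneg (Real.rpow_nonneg (abs_nonneg _) _)]
        refine Real.rpow_le_rpow (abs_nonneg _) ?_ hq0.le
        have := abs_sub_abs_le_abs_sub (A.indicator (fun _ => (1:ℝ)) x) ((μ A).toReal)
        have h1 : |A.indicator (fun _ => (1:ℝ)) x| ≤ 1 := by
          by_cases hx : x ∈ A <;> simp [hx]
        calc |A.indicator (fun _ => (1:ℝ)) x - (μ A).toReal| ≤
            |A.indicator (fun _ => (1:ℝ)) x| + |(μ A).toReal| := abs_sub _ _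
          _ ≤ 2 := by rw [abs_of_nonneg ha0]; linarith)
  have hint2 : Integrable (fun x => A.indicator (fun _ => (1:ℝ)) x + (μ A).toReal ^ q) μ :=
    (integrable_of_abs_le hmeas.aestronglyMeasurable (M := 1) (fun x => by
      by_cases hx : x ∈ A <;> simp [hx])).add (integrable_const _)
  have hintind : ∫ x, A.indicator (fun _ => (1:ℝ)) x ∂μ = (μ A).toReal := by
    rw [integral_indicator_const (1:ℝ) hA]; simp; rfl
  have haq : (μ A).toReal ^ q ≤ (μ A).toReal := by
    rcases eq_or_lt_of_le ha0 with h | h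
    · rw [← h, Real.zero_rpow hq0.ne']
    · calc (μ A).toReal ^ q ≤ (μ A).toReal ^ (1:ℝ) :=
          Real.rpow_le_rpow_of_exponent_ge h ha1 hq
        _ = (μ A).toReal := Real.rpow_one _
  have hI : ∫ x, |A.indicator (fun _ => (1:ℝ)) x - (μ A).toReal| ^ q ∂μ ≤ 2 * (μ A).toReal := by
    calc ∫ x, |A.indicator (fun _ => (1:ℝ)) x - (μ A).toReal| ^ q ∂μ ≤
        ∫ x, (A.indicator (fun _ => (1:ℝ)) x + (μ A).toReal ^ q) ∂μ :=
          integral_mono hint1 hint2 hptw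
      _ = (μ A).toReal + (μ A).toReal ^ q := by
          rw [integral_add (integrable_of_abs_le hmeas.aestronglyMeasurable (M := 1)
            (fun x => by by_cases hx : x ∈ A <;> simp [hx])) (integrable_const _),
            hintind, integral_const]
          simp
      _ ≤ 2 * (μ A).toReal := by linarith
  calc (∫ x, |A.indicator (fun _ => (1:ℝ)) x - (μ A).toReal| ^ q ∂μ) ^ (1/q) ≤
      (2 * (μ A).toReal) ^ (1/q) :=
        Real.rpow_le_rpow (integral_nonneg fun x => Real.rpow_nonneg (abs_nonneg _) _) hI
          (by positivity)
    _ = 2 ^ (1/q) * (μ A).toReal ^ (1/q) := Real.mul_rpow (by norm_num) ha0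
    _ ≤ 2 * (μ A).toReal ^ (1/q) := by
        refine mul_le_mul_of_nonneg_right ?_ (Real.rpow_nonneg ha0 _)
        calc (2:ℝ) ^ (1/q) ≤ 2 ^ (1:ℝ) :=
            Real.rpow_le_rpow_of_exponent_le one_le_two (by rw [div_le_one hq0]; linarith)
          _ = 2 := Real.rpow_one 2

def cseq (C0 : ℝ) (ρ : ℕ → ℝ) : ℕ → ℝ := fun l => if l = 0 then 1 else C0 * ρ l

lemma cseq_nonneg {C0 : ℝ} (hC0 : 0 ≤ C0) {ρ : ℕ → ℝ} (hρ : ∀ n, 0 ≤ ρ n) (l : ℕ) :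
    0 ≤ cseq C0 ρ l := by
  unfold cseq
  split
  · norm_num
  · exact mul_nonneg hC0 (hρ l)

lemma rho_shift_sum_le {ρ : ℕ → ℝ} (hρ : ∀ n, 0 ≤ ρ n) (hsum : Summable ρ) (n : ℕ) :
    ∑ i ∈ Finset.range n, ρ (i + 1) ≤ ∑' i, ρ i := by
  have h3 : ∑ i ∈ Finset.range n, ρ (i + 1) + ρ 0 = ∑ i ∈ Finset.range (n + 1), ρ i :=
    (Finset.sum_range_succ' ρ n).symm
  have h4 : ∑ i ∈ Finset.range (n + 1), ρ i ≤ ∑' i, ρ i :=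
    hsum.sum_le_tsum _ (fun i _ => hρ i)
  linarith [hρ 0]

lemma cseq_sum_le {C0 : ℝ} (hC0 : 0 ≤ C0) {ρ : ℕ → ℝ} (hρ : ∀ n, 0 ≤ ρ n) (hsum : Summable ρ)
    (n : ℕ) : ∑ l ∈ Finset.range n, cseq C0 ρ l ≤ 1 + C0 * ∑' i, ρ i := by
  have hts : 0 ≤ ∑' i, ρ i := tsum_nonneg hρ
  cases n with
  | zero => simp; positivity
  | succ n =>
    rw [Finset.sum_range_succ']
    have h1 : ∑ i ∈ Finset.range n, cseq C0 ρ (i + 1) =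
        C0 * ∑ i ∈ Finset.range n, ρ (i + 1) := by
      rw [Finset.mul_sum]
      exact Finset.sum_congr rfl fun i _ => by unfold cseq; simp
    have h2 := rho_shift_sum_le hρ hsum n
    have h0 : cseq C0 ρ 0 = 1 := by unfold cseq; simp
    rw [h1, h0]
    nlinarith [mul_le_mul_of_nonneg_left h2 hC0]

lemma cseq_row {C0 : ℝ} (hC0 : 0 ≤ C0) {ρ : ℕ → ℝ} (hρ : ∀ n, 0 ≤ ρ n) (hsum : Summable ρ)
    (N j : ℕ) (hj : j < N) :
    ∑ k ∈ Finset.range N, cseq C0 ρ (if j ≤ k then k - j else j - k) ≤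
      2 * (1 + C0 * ∑' i, ρ i) := by
  have hts : 0 ≤ ∑' i, ρ i := tsum_nonneg hρ
  rw [← Finset.sum_filter_add_sum_filter_not (Finset.range N) (fun k => k ≤ j)]
  have e1 : (Finset.range N).filter (fun k => k ≤ j) = Finset.range (j + 1) := by
    ext k; simp only [Finset.mem_filter, Finset.mem_range]; omega
  have e2 : (Finset.range N).filter (fun k => ¬ k ≤ j) = Finset.Ico (j + 1) N := by
    ext k; simp only [Finset.mem_filter, Finset.mem_range, Finset.mem_Ico]; omega
  rw [e1, e2]
  have h1 : ∑ k ∈ Finset.range (j + 1), cseq C0 ρ (if j ≤ k then k - j else j - k) =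
      ∑ k ∈ Finset.range (j + 1), cseq C0 ρ (j - k) := by
    refine Finset.sum_congr rfl fun k hk => ?_
    simp only [Finset.mem_range] at hk
    congr 1
    split_ifs with h <;> omega
  have h2 : ∑ k ∈ Finset.range (j + 1), cseq C0 ρ (j - k) =
      ∑ l ∈ Finset.range (j + 1), cseq C0 ρ l := by
    have := Finset.sum_range_reflect (fun l => cseq C0 ρ l) (j + 1)
    simpa using this
  have h3 : ∑ k ∈ Finset.Ico (j + 1) N, cseq C0 ρ (if j ≤ k then k - j else j - k) =
      ∑ i ∈ Finset.range (N - (j + 1)), cseq C0 ρ (i + 1) := by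
    rw [Finset.sum_Ico_eq_sum_range]
    refine Finset.sum_congr rfl fun i _ => ?_
    congr 1
    rw [if_pos (by omega)]
    omega
  have h4 : ∑ i ∈ Finset.range (N - (j + 1)), cseq C0 ρ (i + 1) ≤ C0 * ∑' i, ρ i := by
    have hh : ∑ i ∈ Finset.range (N - (j + 1)), cseq C0 ρ (i + 1) =
        C0 * ∑ i ∈ Finset.range (N - (j + 1)), ρ (i + 1) := by
      rw [Finset.mul_sum]
      exact Finset.sum_congr rfl fun i _ => by unfold cseq; simp
    rw [hh]
    exact mul_le_mul_of_nonneg_left (rho_shift_sum_le hρ hsum _) hC0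
  have h5 := cseq_sum_le hC0 hρ hsum (j + 1)
  rw [h1, h2, h3]
  linarith

end FGaux

set_option maxHeartbeats 2000000 in
/-- Key estimate in the proof of Theorem 17 of Fournier-Guillin: for a Markov chain with
`L²`-decay, summable rates, and initial law `ν` with `dν/dπ ∈ L^r(invμ)` (`r > 2`),
`E_ν|μ_N(A) - invμ(A)| ≤ C invμ(A)^{(r-1)/(2r)} N^{-1/2}`. -/
theorem markov_chain_empirical_L1_bound
    (d : ℕ) (hd : 1 ≤ d) (r : ℝ) (hr : 2 < r)
    (K : ProbabilityTheory.Kernel (EuclideanSpace ℝ (Fin d)) (EuclideanSpace ℝ (Fin d)))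
    (hK : ProbabilityTheory.IsMarkovKernel K)
    (ν invμ : Measure (EuclideanSpace ℝ (Fin d)))
    (hν : IsProbabilityMeasure ν) (hπ : IsProbabilityMeasure invμ)
    (hinv : invμ.bind (fun x => K x) = invμ)
    (ρ : ℕ → ℝ) (hρpos : ∀ n, 0 ≤ ρ n) (hρsum : Summable ρ)
    (C0 : ℝ) (hC0 : 0 < C0)
    -- L² decay of the semigroup
    (hdecay : ∀ n : ℕ, 1 ≤ n → ∀ f : EuclideanSpace ℝ (Fin d) → ℝ, MemLp f 2 invμ →
      eLpNorm (fun x => (∫ y, f y ∂(kiter d K n x)) - ∫ y, f y ∂invμ) 2 invμ ≤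
        ENNReal.ofReal (C0 * ρ n) * eLpNorm (fun x => f x - ∫ y, f y ∂invμ) 2 invμ)
    (habs : ν ≪ invμ)
    (hrn : MemLp (fun x => (ν.rnDeriv invμ x).toReal) (ENNReal.ofReal r) invμ) :
    ∃ C : ℝ, 0 < C ∧
      ∀ (Ω : Type) (_ : MeasurableSpace Ω) (P : Measure Ω), IsProbabilityMeasure P →
      ∀ X : ℕ → Ω → EuclideanSpace ℝ (Fin d),
        (∀ n, Measurable (X n)) →
        Measure.map (X 0) P = ν →
        -- Markov property with transition kernel `K`
        (∀ n : ℕ, Measure.map (fun ω => ((fun i : Fin (n + 1) => X i ω), X (n + 1) ω)) P =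
          (Measure.map (fun ω (i : Fin (n + 1)) => X i ω) P) ⊗ₘ
            (K.comap (fun v : Fin (n + 1) → EuclideanSpace ℝ (Fin d) => v (Fin.last n))
              (measurable_pi_apply _))) →
      ∀ A : Set (EuclideanSpace ℝ (Fin d)), MeasurableSet A → ∀ N : ℕ, 1 ≤ N →
        ∫ ω, |((empMeas d N fun k => X (k + 1) ω) A).toReal - (invμ A).toReal| ∂P ≤
          C * (invμ A).toReal ^ ((r - 1) / (2 * r)) * (N : ℝ) ^ (-(1 : ℝ) / 2) := by

  haveI := hK
  haveI := hν
  haveI := hπ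
  have hr0 : (0:ℝ) < r := by linarith
  have hr1 : (1:ℝ) < r := by linarith
  have hhmeas : Measurable (fun x => (ν.rnDeriv invμ x).toReal) :=
    (Measure.measurable_rnDeriv ν invμ).ennreal_toReal
  have hh0 : ∀ x, 0 ≤ (ν.rnDeriv invμ x).toReal := fun _ => ENNReal.toReal_nonneg
  set Hr : ℝ := (∫ x, (ν.rnDeriv invμ x).toReal ^ r ∂invμ) ^ (1/r) with hHrdef
  have hHr0 : 0 ≤ Hr :=
    Real.rpow_nonneg (integral_nonneg fun x => Real.rpow_nonneg (hh0 x) _) _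
  have hSr0 : 0 ≤ ∑' n, ρ n := tsum_nonneg hρpos
  have hcs0 : (0:ℝ) < 1 + C0 * ∑' n, ρ n := by nlinarith
  set B : ℝ := 8 * (Hr + 1) * (1 + C0 * ∑' n, ρ n) with hBdef
  have hB0 : 0 < B := by
    rw [hBdef]
    apply mul_pos (by nlinarith) hcs0
  refine ⟨Real.sqrt B + 1, by positivity, ?_⟩
  intro Ω mΩ P hP X hX hX0 hMar A hA N hN
  haveI := hP
  set a : ℝ := (invμ A).toReal with hadef
  have ha0 : 0 ≤ a := ENNReal.toReal_nonneg
  have ha1 : a ≤ 1 := by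
    have h := prob_le_one (μ := invμ) (s := A)
    have h2 := ENNReal.toReal_mono ENNReal.one_ne_top h
    simpa using h2
  set rc : ℝ := r / (r - 1) with hrcdef
  have hconj : r.HolderConjugate rc := Real.holderConjugate_iff.mpr ⟨hr1, by rw [hrcdef]; field_simp; ring⟩
  have hrc1 : 1 < rc := hconj.symm.lt
  have hrc0 : 0 < rc := by linarith
  set sE : ℝ := 2 * r / (r - 2) with hsEdef
  have hsE2 : (2:ℝ) < sE := by
    rw [hsEdef, lt_div_iff₀ (by linarith)]
    nlinarith
  have hsE0 : (0:ℝ) < sE := by linarith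
  have hrcsE : rc < 2 := by
    rw [hrcdef, div_lt_iff₀ (by linarith)]
    nlinarith
  have hconj2 : (sE / rc).HolderConjugate (2 / rc) := by
    rw [Real.holderConjugate_iff]
    constructor
    · rw [lt_div_iff₀ hrc0, one_mul]
      linarith
    · have h1 : r ≠ 0 := by linarith
      have h2 : r - 1 ≠ 0 := by linarith
      have h3 : r - 2 ≠ 0 := by linarith
      rw [hsEdef, hrcdef, div_div_div_eq, inv_div, div_div_eq_mul_div, inv_div]
      rw [div_add_div _ _ (by positivity) (by positivity)]
      rw [div_eq_one_iff_eq (by positivity)]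
      ring
  -- the indicator function
  set χ : EuclideanSpace ℝ (Fin d) → ℝ := A.indicator (fun _ => 1) with hχdef
  have hχmeas : Measurable χ := measurable_const.indicator hA
  have hχ0 : ∀ x, 0 ≤ χ x := fun x => Set.indicator_nonneg (fun _ _ => zero_le_one) x
  have hχ1 : ∀ x, χ x ≤ 1 := fun x => by
    rw [hχdef]
    by_cases hx : x ∈ A <;> simp [hx]
  have hχb : ∀ x, |χ x| ≤ 1 := fun x => by rw [abs_of_nonneg (hχ0 x)]; exact hχ1 x
  have hχint : ∫ x, χ x ∂invμ = a := by
    rw [hχdef, integral_indicator_const (1:ℝ) hA, smul_eq_mul, mul_one]; rfl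
  have hftilm : Measurable (fun x => χ x - a) := hχmeas.sub measurable_const
  have hftilb : ∀ x, |χ x - a| ≤ 1 := fun x =>
    abs_le.mpr ⟨by linarith [hχ0 x], by linarith [hχ1 x]⟩
  have hftilq : ∀ q : ℝ, 1 ≤ q →
      (∫ x, |χ x - a| ^ q ∂invμ) ^ (1/q) ≤ 2 * a ^ (1/q) := by
    intro q hq
    have := FGaux.indicator_rpow_bound (μ := invμ) hA hq
    rw [← hχdef, ← hadef] at this
    exact this
  -- measurability and bounds for kernel averages of χ
  have hPkm : ∀ k : ℕ, Measurable (fun x => ∫ y, χ y ∂kiter d K k x) := fun k => by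
    haveI := FGaux.kiter_markov (K := K) k
    exact FGaux.measurable_kernel_integral _ hχmeas
  have hPkb : ∀ k x, 0 ≤ (∫ y, χ y ∂kiter d K k x) ∧ (∫ y, χ y ∂kiter d K k x) ≤ 1 := by
    intro k x
    haveI := FGaux.kiter_markov (K := K) k
    constructor
    · exact integral_nonneg fun y => hχ0 y
    · exact (le_abs_self _).trans (FGaux.abs_integral_le hχmeas.aestronglyMeasurable hχb)
  have hgkm : ∀ k : ℕ, Measurable (fun x => (∫ y, χ y ∂kiter d K k x) - a) :=
    fun k => (hPkm k).sub measurable_const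
  have hgkb : ∀ k x, |(∫ y, χ y ∂kiter d K k x) - a| ≤ 1 := fun k x =>
    abs_le.mpr ⟨by linarith [(hPkb k x).1], by linarith [(hPkb k x).2]⟩
  -- L² bound on the decayed term
  have hgk2 : ∀ k : ℕ,
      (∫ x, |(∫ y, χ y ∂kiter d K k x) - a| ^ (2:ℝ) ∂invμ) ^ (1/2:ℝ) ≤
        FGaux.cseq C0 ρ k * (2 * a ^ (1/2:ℝ)) := by
    intro k
    cases k with
    | zero =>
      have e : ∀ x, |(∫ y, χ y ∂kiter d K 0 x) - a| ^ (2:ℝ) = |χ x - a| ^ (2:ℝ) := fun x => by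
        rw [FGaux.kiter_integral_zero hχmeas]
      rw [integral_congr_ae (Filter.Eventually.of_forall e)]
      have h2 := hftilq 2 one_le_two
      have hc : FGaux.cseq C0 ρ 0 = 1 := by unfold FGaux.cseq; simp
      rw [hc, one_mul]
      exact h2
    | succ k =>
      have hmem : MemLp χ 2 invμ := by
        rw [hχdef]
        exact memLp_indicator_const 2 hA 1 (Or.inr (measure_ne_top _ _))
      have hd := hdecay (k+1) (by omega) χ hmem
      rw [hχint] at hd
      rw [FGaux.eLpNorm_two_eq (hgkm (k+1)) (M := 1) (hgkb (k+1)),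
        FGaux.eLpNorm_two_eq hftilm (M := 1) hftilb,
        ← ENNReal.ofReal_mul (mul_nonneg hC0.le (hρpos _))] at hd
      have hd2 := (ENNReal.ofReal_le_ofReal_iff
        (mul_nonneg (mul_nonneg hC0.le (hρpos _))
          (Real.rpow_nonneg (integral_nonneg fun x =>
            Real.rpow_nonneg (abs_nonneg _) _) _))).mp hd
      have h2 := hftilq 2 one_le_two
      have hc : FGaux.cseq C0 ρ (k+1) = C0 * ρ (k+1) := by unfold FGaux.cseq; simp
      rw [hc]
      calc (∫ x, |(∫ y, χ y ∂kiter d K (k+1) x) - a| ^ (2:ℝ) ∂invμ) ^ (1/2:ℝ) ≤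
          C0 * ρ (k+1) * (∫ x, |χ x - a| ^ (2:ℝ) ∂invμ) ^ (1/2:ℝ) := hd2
        _ ≤ C0 * ρ (k+1) * (2 * a ^ (1/2:ℝ)) :=
            mul_le_mul_of_nonneg_left h2 (mul_nonneg hC0.le (hρpos _))
  -- the pair covariance bound
  have pairB : ∀ m k : ℕ,
      |∫ ω, (χ (X m ω) - a) * (χ (X (m + k) ω) - a) ∂P| ≤
        4 * (Hr + 1) * a ^ ((r - 1)/r) * FGaux.cseq C0 ρ k := by
    intro m k
    haveI := FGaux.kiter_markov (K := K) k
    haveI := FGaux.kiter_markov (K := K) m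
    have hφm : Measurable (fun x => (χ x - a) * ((∫ y, χ y ∂kiter d K k x) - a)) :=
      hftilm.mul (hgkm k)
    have hφb : ∀ x, |(χ x - a) * ((∫ y, χ y ∂kiter d K k x) - a)| ≤ 1 := fun x => by
      rw [abs_mul]
      exact mul_le_one₀ (hftilb x) (abs_nonneg _) (hgkb k x)
    have hkey : ∫ ω, (χ (X m ω) - a) * χ (X (m + k) ω) ∂P =
        ∫ ω, (χ (X m ω) - a) * (∫ y, χ y ∂kiter d K k (X m ω)) ∂P :=
      FGaux.key_markov P X hX hMar k m _ _ hftilm hχmeas hftilb hχb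
    have hexp : ∫ ω, (1:ℝ) *
          ((χ (X (0 + m) ω) - a) * ((∫ y, χ y ∂kiter d K k (X (0 + m) ω)) - a)) ∂P =
        ∫ ω, (1:ℝ) *
          (∫ y, (χ y - a) * ((∫ z, χ z ∂kiter d K k y) - a) ∂kiter d K m (X 0 ω)) ∂P :=
      FGaux.key_markov P X hX hMar m 0 (fun _ => (1:ℝ)) _ measurable_const hφm
        (fun _ => by norm_num) hφb
    simp only [one_mul, Nat.zero_add] at hexp
    have int1 : Integrable (fun ω => (χ (X m ω) - a) * χ (X (m + k) ω)) P :=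
      FGaux.integrable_of_abs_le
        ((hftilm.comp (hX m)).mul (hχmeas.comp (hX (m + k)))).aestronglyMeasurable
        (M := 1) (fun ω => by
          rw [abs_mul]
          exact mul_le_one₀ (hftilb _) (abs_nonneg _) (hχb _))
    have int2 : Integrable (fun ω => χ (X m ω) - a) P :=
      FGaux.integrable_of_abs_le (hftilm.comp (hX m)).aestronglyMeasurable (M := 1)
        (fun ω => hftilb _)
    have int3 : Integrable (fun ω => (χ (X m ω) - a) * (∫ y, χ y ∂kiter d K k (X m ω))) P :=
      FGaux.integrable_of_abs_le
        ((hftilm.comp (hX m)).mul ((hPkm k).comp (hX m))).aestronglyMeasurable (M := 1)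
        (fun ω => by
          rw [abs_mul]
          refine mul_le_one₀ (hftilb _) (abs_nonneg _) ?_
          rw [abs_of_nonneg (hPkb k _).1]
          exact (hPkb k _).2)
    have eqA : ∫ ω, (χ (X m ω) - a) * (χ (X (m + k) ω) - a) ∂P =
        ∫ ω, (χ (X m ω) - a) * ((∫ y, χ y ∂kiter d K k (X m ω)) - a) ∂P := by
      have e1 : (fun ω => (χ (X m ω) - a) * (χ (X (m + k) ω) - a)) =
          fun ω => (χ (X m ω) - a) * χ (X (m + k) ω) - a * (χ (X m ω) - a) :=
        funext fun ω => by ring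
      rw [e1, integral_sub int1 (int2.const_mul a), hkey,
        ← integral_sub int3 (int2.const_mul a)]
      exact integral_congr_ae (Filter.Eventually.of_forall fun ω => by ring)
    have hFm : Measurable (fun x =>
        ∫ y, (χ y - a) * ((∫ z, χ z ∂kiter d K k y) - a) ∂kiter d K m x) :=
      FGaux.measurable_kernel_integral _ hφm
    have hmap : ∫ ω, (∫ y, (χ y - a) * ((∫ z, χ z ∂kiter d K k y) - a)
          ∂kiter d K m (X 0 ω)) ∂P =
        ∫ x, (∫ y, (χ y - a) * ((∫ z, χ z ∂kiter d K k y) - a) ∂kiter d K m x) ∂ν := by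
      rw [← hX0, integral_map (hX 0).aemeasurable hFm.aestronglyMeasurable]
    have hcore : |∫ x, (∫ y, (χ y - a) * ((∫ z, χ z ∂kiter d K k y) - a)
          ∂kiter d K m x) ∂ν| ≤
        Hr * (∫ x, |(χ x - a) * ((∫ z, χ z ∂kiter d K k x) - a)| ^ rc ∂invμ) ^ (1/rc) :=
      FGaux.core_bound (K := K) hinv habs hconj hrn hφm hφb m
    -- Hölder split of the rc-norm
    have hgE1 : ∀ x, |(χ x - a) * ((∫ z, χ z ∂kiter d K k x) - a)| ^ rc =
        |χ x - a| ^ rc * |(∫ z, χ z ∂kiter d K k x) - a| ^ rc := fun x => by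
      rw [abs_mul, Real.mul_rpow (abs_nonneg _) (abs_nonneg _)]
    have hm1 : MemLp (fun x => |χ x - a| ^ rc) (ENNReal.ofReal (sE / rc)) invμ :=
      MemLp.of_bound
        ((Real.continuous_rpow_const hrc0.le).measurable.comp hftilm.abs).aestronglyMeasurable 1
        (Filter.Eventually.of_forall fun x => by
          rw [Real.norm_eq_abs, abs_of_nonneg (Real.rpow_nonneg (abs_nonneg _) _)]
          exact Real.rpow_le_one (abs_nonneg _) (hftilb x) hrc0.le)
    have hm2 : MemLp (fun x => |(∫ z, χ z ∂kiter d K k x) - a| ^ rc)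
        (ENNReal.ofReal (2 / rc)) invμ :=
      MemLp.of_bound
        ((Real.continuous_rpow_const hrc0.le).measurable.comp (hgkm k).abs).aestronglyMeasurable 1
        (Filter.Eventually.of_forall fun x => by
          rw [Real.norm_eq_abs, abs_of_nonneg (Real.rpow_nonneg (abs_nonneg _) _)]
          exact Real.rpow_le_one (abs_nonneg _) (hgkb k x) hrc0.le)
    have hH2 := integral_mul_le_Lp_mul_Lq_of_nonneg hconj2
      (Filter.Eventually.of_forall fun x => Real.rpow_nonneg (abs_nonneg _) _)
      (Filter.Eventually.of_forall fun x => Real.rpow_nonneg (abs_nonneg _) _) hm1 hm2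
    have hcol1 : ∀ x : EuclideanSpace ℝ (Fin d),
        (|χ x - a| ^ rc) ^ (sE / rc) = |χ x - a| ^ sE := fun x => by
      rw [← Real.rpow_mul (abs_nonneg _)]
      congr 1
      field_simp
    have hcol2 : ∀ x : EuclideanSpace ℝ (Fin d),
        (|(∫ z, χ z ∂kiter d K k x) - a| ^ rc) ^ (2 / rc) =
        |(∫ z, χ z ∂kiter d K k x) - a| ^ (2:ℝ) := fun x => by
      rw [← Real.rpow_mul (abs_nonneg _)]
      congr 1
      field_simp
    simp only [hcol1, hcol2, one_div_div] at hH2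
    have hI1 : (0:ℝ) ≤ ∫ x, |χ x - a| ^ sE ∂invμ :=
      integral_nonneg fun x => Real.rpow_nonneg (abs_nonneg _) _
    have hI2 : (0:ℝ) ≤ ∫ x, |(∫ z, χ z ∂kiter d K k x) - a| ^ (2:ℝ) ∂invμ :=
      integral_nonneg fun x => Real.rpow_nonneg (abs_nonneg _) _
    have hsplit : (∫ x, |(χ x - a) * ((∫ z, χ z ∂kiter d K k x) - a)| ^ rc ∂invμ) ^ (1/rc) ≤
        (∫ x, |χ x - a| ^ sE ∂invμ) ^ (1/sE) *
          (∫ x, |(∫ z, χ z ∂kiter d K k x) - a| ^ (2:ℝ) ∂invμ) ^ (1/2:ℝ) := by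
      calc (∫ x, |(χ x - a) * ((∫ z, χ z ∂kiter d K k x) - a)| ^ rc ∂invμ) ^ (1/rc)
          = (∫ x, |χ x - a| ^ rc * |(∫ z, χ z ∂kiter d K k x) - a| ^ rc ∂invμ) ^ (1/rc) := by
            rw [integral_congr_ae (Filter.Eventually.of_forall hgE1)]
        _ ≤ ((∫ x, |χ x - a| ^ sE ∂invμ) ^ (rc/sE) *
            (∫ x, |(∫ z, χ z ∂kiter d K k x) - a| ^ (2:ℝ) ∂invμ) ^ (rc/2)) ^ (1/rc) :=
            Real.rpow_le_rpow (integral_nonneg fun x =>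
              mul_nonneg (Real.rpow_nonneg (abs_nonneg _) _)
                (Real.rpow_nonneg (abs_nonneg _) _)) hH2 (by positivity)
        _ = _ := by
            rw [Real.mul_rpow (Real.rpow_nonneg hI1 _) (Real.rpow_nonneg hI2 _),
              ← Real.rpow_mul hI1, ← Real.rpow_mul hI2]
            congr 1
            · congr 1
              field_simp
            · congr 1
              field_simp
    have hfsE := hftilq sE (by linarith)
    have hg2 := hgk2 k
    have hcnn : 0 ≤ FGaux.cseq C0 ρ k := FGaux.cseq_nonneg hC0.le hρpos k
    have hfin : (∫ x, |(χ x - a) * ((∫ z, χ z ∂kiter d K k x) - a)| ^ rc ∂invμ) ^ (1/rc) ≤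
        (2 * a ^ (1/sE)) * (FGaux.cseq C0 ρ k * (2 * a ^ (1/2:ℝ))) := by
      refine hsplit.trans ?_
      refine mul_le_mul hfsE hg2 (Real.rpow_nonneg hI2 _) (by positivity)
    have haa : a ^ (1/sE) * a ^ (1/2:ℝ) = a ^ ((r - 1)/r) := by
      rw [← Real.rpow_add' ha0 (by positivity)]
      congr 1
      rw [hsEdef]
      field_simp
      ring
    calc |∫ ω, (χ (X m ω) - a) * (χ (X (m + k) ω) - a) ∂P|
        = |∫ x, (∫ y, (χ y - a) * ((∫ z, χ z ∂kiter d K k y) - a) ∂kiter d K m x) ∂ν| := by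
          rw [eqA, hexp, hmap]
      _ ≤ Hr * ((2 * a ^ (1/sE)) * (FGaux.cseq C0 ρ k * (2 * a ^ (1/2:ℝ)))) :=
          hcore.trans (mul_le_mul_of_nonneg_left hfin hHr0)
      _ = 4 * Hr * (a ^ (1/sE) * a ^ (1/2:ℝ)) * FGaux.cseq C0 ρ k := by ring
      _ = 4 * Hr * a ^ ((r - 1)/r) * FGaux.cseq C0 ρ k := by rw [haa]
      _ ≤ 4 * (Hr + 1) * a ^ ((r - 1)/r) * FGaux.cseq C0 ρ k := by
          nlinarith [mul_nonneg (Real.rpow_nonneg ha0 ((r - 1)/r)) hcnn]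
  -- final assembly
  have hNR : (0:ℝ) < N := by exact_mod_cast hN
  have hNne : (N:ℝ) ≠ 0 := ne_of_gt hNR
  have hYm : ∀ j : ℕ, Measurable (fun ω => χ (X j ω) - a) := fun j => hftilm.comp (hX j)
  have hSNm : Measurable (fun ω => ∑ j ∈ Finset.range N, (χ (X (j+1) ω) - a)) :=
    Finset.measurable_sum _ (fun j _ => hYm (j+1))
  have hSNb : ∀ ω, |∑ j ∈ Finset.range N, (χ (X (j+1) ω) - a)| ≤ N := fun ω => by
    calc |∑ j ∈ Finset.range N, (χ (X (j+1) ω) - a)| ≤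
        ∑ j ∈ Finset.range N, |χ (X (j+1) ω) - a| := Finset.abs_sum_le_sum_abs _ _
      _ ≤ ∑ _j ∈ Finset.range N, (1:ℝ) := Finset.sum_le_sum fun j _ => hftilb _
      _ = N := by simp
  have hrepr : ∀ ω, ((empMeas d N fun k => X (k + 1) ω) A).toReal - a =
      (N:ℝ)⁻¹ * ∑ j ∈ Finset.range N, (χ (X (j+1) ω) - a) := by
    intro ω
    have h1 : (empMeas d N fun k => X (k + 1) ω) A =
        ((N : ℝ≥0∞))⁻¹ *
          ∑ k ∈ Finset.range N, (A.indicator (fun _ => (1:ℝ≥0∞)) (X (k+1) ω)) := by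
      unfold empMeas
      rw [Measure.smul_apply, Measure.finset_sum_apply, smul_eq_mul]
      congr 1
      exact Finset.sum_congr rfl fun k _ => Measure.dirac_apply' _ hA
    have h2 : ((empMeas d N fun k => X (k + 1) ω) A).toReal =
        (N:ℝ)⁻¹ * ∑ k ∈ Finset.range N, χ (X (k+1) ω) := by
      rw [h1, ENNReal.toReal_mul, ENNReal.toReal_inv, ENNReal.toReal_natCast,
        ENNReal.toReal_sum (fun k _ => by
          by_cases hx : X (k+1) ω ∈ A <;> simp [hx])]
      congr 1
      refine Finset.sum_congr rfl fun k _ => ?_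
      rw [hχdef]
      by_cases hx : X (k+1) ω ∈ A <;> simp [hx]
    rw [h2, Finset.sum_sub_distrib, Finset.sum_const, Finset.card_range, nsmul_eq_mul,
      mul_sub]
    congr 1
    rw [← mul_assoc, inv_mul_cancel₀ hNne, one_mul]
  have hLHS : ∫ ω, |((empMeas d N fun k => X (k + 1) ω) A).toReal - a| ∂P =
      (N:ℝ)⁻¹ * ∫ ω, |∑ j ∈ Finset.range N, (χ (X (j+1) ω) - a)| ∂P := by
    rw [← integral_const_mul]
    refine integral_congr_ae (Filter.Eventually.of_forall fun ω => ?_)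
    show |((empMeas d N fun k => X (k + 1) ω) A).toReal - a| =
      (N:ℝ)⁻¹ * |∑ j ∈ Finset.range N, (χ (X (j+1) ω) - a)|
    rw [hrepr ω, abs_mul, abs_of_nonneg (by positivity : (0:ℝ) ≤ (N:ℝ)⁻¹)]
  have hsq : ∀ ω, |∑ j ∈ Finset.range N, (χ (X (j+1) ω) - a)| ^ (2:ℝ) =
      ∑ j ∈ Finset.range N, ∑ l ∈ Finset.range N,
        (χ (X (j+1) ω) - a) * (χ (X (l+1) ω) - a) := fun ω => by
    rw [show (2:ℝ) = ((2:ℕ):ℝ) by norm_num, Real.rpow_natCast, sq_abs, pow_two,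
      Finset.sum_mul_sum]
  have hintjl : ∀ j l : ℕ,
      Integrable (fun ω => (χ (X (j+1) ω) - a) * (χ (X (l+1) ω) - a)) P :=
    fun j l => FGaux.integrable_of_abs_le
      ((hYm (j+1)).mul (hYm (l+1))).aestronglyMeasurable (M := 1)
      (fun ω => by rw [abs_mul]; exact mul_le_one₀ (hftilb _) (abs_nonneg _) (hftilb _))
  have perterm : ∀ j l : ℕ, |∫ ω, (χ (X (j+1) ω) - a) * (χ (X (l+1) ω) - a) ∂P| ≤
      4 * (Hr + 1) * a ^ ((r - 1)/r) * FGaux.cseq C0 ρ (if j ≤ l then l - j else j - l) := by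
    intro j l
    rcases le_or_gt j l with h | h
    · rw [if_pos h]
      have hjl := pairB (j+1) (l - j)
      have e : (j+1) + (l - j) = l + 1 := by omega
      rw [e] at hjl
      exact hjl
    · rw [if_neg (not_le.mpr h)]
      have hjl := pairB (l+1) (j - l)
      have e : (l+1) + (j - l) = j + 1 := by omega
      rw [e] at hjl
      have hc : ∫ ω, (χ (X (j+1) ω) - a) * (χ (X (l+1) ω) - a) ∂P =
          ∫ ω, (χ (X (l+1) ω) - a) * (χ (X (j+1) ω) - a) ∂P :=
        integral_congr_ae (Filter.Eventually.of_forall fun ω => by ring)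
      rw [hc]
      exact hjl
  have hvar : ∫ ω, |∑ j ∈ Finset.range N, (χ (X (j+1) ω) - a)| ^ (2:ℝ) ∂P ≤
      (N:ℝ) * (B * a ^ ((r - 1)/r)) := by
    rw [integral_congr_ae (Filter.Eventually.of_forall hsq),
      integral_finset_sum _ (fun j _ => integrable_finset_sum _ (fun l _ => hintjl j l))]
    calc ∑ j ∈ Finset.range N, ∫ ω, ∑ l ∈ Finset.range N,
          (χ (X (j+1) ω) - a) * (χ (X (l+1) ω) - a) ∂P
        = ∑ j ∈ Finset.range N, ∑ l ∈ Finset.range N,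
            ∫ ω, (χ (X (j+1) ω) - a) * (χ (X (l+1) ω) - a) ∂P :=
          Finset.sum_congr rfl fun j _ => integral_finset_sum _ (fun l _ => hintjl j l)
      _ ≤ ∑ j ∈ Finset.range N, ∑ l ∈ Finset.range N,
            |∫ ω, (χ (X (j+1) ω) - a) * (χ (X (l+1) ω) - a) ∂P| :=
          Finset.sum_le_sum fun j _ => Finset.sum_le_sum fun l _ => le_abs_self _
      _ ≤ ∑ j ∈ Finset.range N, ∑ l ∈ Finset.range N,
            4 * (Hr + 1) * a ^ ((r - 1)/r) *
              FGaux.cseq C0 ρ (if j ≤ l then l - j else j - l) :=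
          Finset.sum_le_sum fun j _ => Finset.sum_le_sum fun l _ => perterm j l
      _ ≤ ∑ _j ∈ Finset.range N,
            4 * (Hr + 1) * a ^ ((r - 1)/r) * (2 * (1 + C0 * ∑' n, ρ n)) := by
          refine Finset.sum_le_sum fun j hj => ?_
          rw [← Finset.mul_sum]
          refine mul_le_mul_of_nonneg_left
            (FGaux.cseq_row hC0.le hρpos hρsum N j (Finset.mem_range.mp hj)) ?_
          have := Real.rpow_nonneg ha0 ((r - 1)/r)
          nlinarith
      _ = (N:ℝ) * (B * a ^ ((r - 1)/r)) := by
          rw [Finset.sum_const, Finset.card_range, nsmul_eq_mul, hBdef]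
          ring
  have h2conj : (2:ℝ).HolderConjugate 2 := Real.HolderConjugate.two_two
  have hmemS : MemLp (fun ω => |∑ j ∈ Finset.range N, (χ (X (j+1) ω) - a)|)
      (ENNReal.ofReal 2) P :=
    MemLp.of_bound hSNm.abs.aestronglyMeasurable (N:ℝ)
      (Filter.Eventually.of_forall fun ω => by
        rw [Real.norm_eq_abs, abs_abs]; exact hSNb ω)
  have hmem1 : MemLp (fun _ : Ω => (1:ℝ)) (ENNReal.ofReal 2) P := memLp_const 1
  have hCS := integral_mul_le_Lp_mul_Lq_of_nonneg h2conj
    (Filter.Eventually.of_forall fun ω => abs_nonneg _)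
    (Filter.Eventually.of_forall fun _ : Ω => zero_le_one) hmemS hmem1
  simp only [mul_one, Real.one_rpow, integral_const, measure_univ, probReal_univ, ENNReal.toReal_one,
    smul_eq_mul, one_mul] at hCS
  have step : ∫ ω, |∑ j ∈ Finset.range N, (χ (X (j+1) ω) - a)| ∂P ≤
      ((N:ℝ) * (B * a ^ ((r - 1)/r))) ^ (1/2:ℝ) :=
    hCS.trans (Real.rpow_le_rpow
      (integral_nonneg fun ω => Real.rpow_nonneg (abs_nonneg _) _) hvar (by norm_num))
  have hexpand : ((N:ℝ) * (B * a ^ ((r - 1)/r))) ^ (1/2:ℝ) =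
      (N:ℝ) ^ (1/2:ℝ) * (Real.sqrt B * a ^ ((r - 1)/(2 * r))) := by
    rw [Real.mul_rpow hNR.le (mul_nonneg hB0.le (Real.rpow_nonneg ha0 _)),
      Real.mul_rpow hB0.le (Real.rpow_nonneg ha0 _),
      ← Real.rpow_mul ha0, Real.sqrt_eq_rpow]
    have he : (r - 1)/r * (1/2:ℝ) = (r - 1)/(2 * r) := by ring
    rw [he]
  rw [hLHS]
  calc (N:ℝ)⁻¹ * ∫ ω, |∑ j ∈ Finset.range N, (χ (X (j+1) ω) - a)| ∂P
      ≤ (N:ℝ)⁻¹ * ((N:ℝ) * (B * a ^ ((r - 1)/r))) ^ (1/2:ℝ) :=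
        mul_le_mul_of_nonneg_left step (by positivity)
    _ = (Real.sqrt B * a ^ ((r - 1)/(2 * r))) * ((N:ℝ)⁻¹ * (N:ℝ) ^ (1/2:ℝ)) := by
        rw [hexpand]; ring
    _ = (Real.sqrt B * a ^ ((r - 1)/(2 * r))) * (N:ℝ) ^ (-(1:ℝ)/2) := by
        congr 1
        rw [← Real.rpow_neg_one (N:ℝ), ← Real.rpow_add hNR]
        norm_num
    _ ≤ (Real.sqrt B + 1) * a ^ ((r - 1)/(2 * r)) * (N:ℝ) ^ (-(1:ℝ)/2) := by
        have h1 : 0 ≤ a ^ ((r - 1)/(2 * r)) := Real.rpow_nonneg ha0 _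
        have h2 : 0 ≤ (N:ℝ) ^ (-(1:ℝ)/2) := Real.rpow_nonneg hNR.le _
        have h3 : 0 ≤ Real.sqrt B := Real.sqrt_nonneg B
        nlinarith [mul_nonneg h1 h2]


end
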